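/- Let Λ ⊆ ℝⁿ be a full-rank lattice with dual lattice Λ*. Then for every real P with 1 ≤ P < 2, the L_P minimum distances satisfy d_P(Λ) · d_P(Λ*) ≤ n^{2/P}. -/

import Mathlib

/-- The `L_P` minimum distance of a subset of `ℝⁿ`. -/
noncomputable def lpDistR (n : ℕ) (P : ℝ) (S : Set (Fin n → ℝ)) : ℝ :=
  sInf {d : ℝ | ∃ x ∈ S, ∃ y ∈ S, x ≠ y ∧ d = (∑ i, |x i - y i| ^ P) ^ (1 / P)}

/-- The dual lattice of a subset of `ℝⁿ`. -/
def dualLattice (n : ℕ) (L : Set (Fin n → ℝ)) : Set (Fin n → ℝ) :=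
  {y | ∀ x ∈ L, ∃ k : ℤ, ∑ i, y i * x i = (k : ℝ)}

open MeasureTheory Submodule Finset Matrix

lemma exists_short (n : ℕ) (c : Module.Basis (Fin n) ℝ (Fin n → ℝ)) (r : ℝ)
    (hr : 0 < r) (hdet : |(Matrix.of ⇑c).det| < r ^ n) :
    ∃ v : Fin n → ℝ, v ∈ span ℤ (Set.range ⇑c) ∧ v ≠ 0 ∧ ∀ i, |v i| ≤ r := by
  classical
  set S : Set (Fin n → ℝ) := Set.univ.pi fun _ : Fin n => Set.Icc (-r) r with hS
  have h_symm : ∀ x ∈ S, -x ∈ S := by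
    intro x hx
    simp only [hS, Set.mem_pi, Set.mem_univ, forall_true_left, Set.mem_Icc] at hx ⊢
    intro i
    constructor
    · simpa using neg_le_neg (hx i).2
    · simpa using neg_le_neg (hx i).1
  have h_conv : Convex ℝ S := convex_pi fun i _ => convex_Icc _ _
  have hvolS : volume S = ENNReal.ofReal ((2 * r) ^ n) := by
    rw [hS, volume_pi_pi]
    simp only [Real.volume_Icc]
    rw [Finset.prod_const, Finset.card_univ, Fintype.card_fin,
      ← ENNReal.ofReal_pow (by linarith : (0:ℝ) ≤ r - -r)]
    congr 1
    ring
  have fund := ZSpan.isAddFundamentalDomain' c (volume : Measure (Fin n → ℝ))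
  have hmeas : volume (ZSpan.fundamentalDomain c) * 2 ^ Module.finrank ℝ (Fin n → ℝ)
      < volume S := by
    rw [ZSpan.volume_fundamentalDomain, hvolS, Module.finrank_fin_fun]
    rw [show ((2 : ENNReal) ^ n) = ENNReal.ofReal (2 ^ n) by
      simp [ENNReal.ofReal_pow]]
    rw [← ENNReal.ofReal_mul (abs_nonneg _)]
    rw [ENNReal.ofReal_lt_ofReal_iff (by positivity)]
    calc |(Matrix.of ⇑c).det| * 2 ^ n < r ^ n * 2 ^ n := by
          apply mul_lt_mul_of_pos_right hdet (by positivity)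
      _ = (2 * r) ^ n := by rw [mul_pow]; ring
  have : Countable (span ℤ (Set.range ⇑c)).toAddSubgroup := by
    change Countable (span ℤ (Set.range ⇑c)); infer_instance
  obtain ⟨x, hx0, hxS⟩ :=
    exists_ne_zero_mem_lattice_of_measure_mul_two_pow_lt_measure fund h_symm h_conv hmeas
  refine ⟨(x : Fin n → ℝ), x.2, ?_, ?_⟩
  · intro h
    exact hx0 (by ext : 1; exact h)
  · intro i
    have := hxS
    simp only [hS, Set.mem_pi, Set.mem_univ, forall_true_left, Set.mem_Icc] at this
    exact abs_le.mpr (this i)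

lemma lpDistR_nonneg (n : ℕ) (P : ℝ) (S : Set (Fin n → ℝ)) : 0 ≤ lpDistR n P S := by
  apply Real.sInf_nonneg
  rintro d ⟨x, hx, y, hy, hxy, rfl⟩
  apply Real.rpow_nonneg
  exact Finset.sum_nonneg fun i _ => Real.rpow_nonneg (abs_nonneg _) _

lemma lpDistR_le (n : ℕ) (P : ℝ) (hP : 1 ≤ P) (S : Set (Fin n → ℝ)) (v : Fin n → ℝ)
    (h0 : (0 : Fin n → ℝ) ∈ S) (hv : v ∈ S) (hvne : v ≠ 0) (r : ℝ) (hr : 0 ≤ r)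
    (hvb : ∀ i, |v i| ≤ r) : lpDistR n P S ≤ (n : ℝ) ^ (1 / P) * r := by
  have hP0 : 0 < P := lt_of_lt_of_le one_pos hP
  have hbdd : BddBelow {d : ℝ | ∃ x ∈ S, ∃ y ∈ S, x ≠ y ∧
      d = (∑ i, |x i - y i| ^ P) ^ (1 / P)} := by
    refine ⟨0, ?_⟩
    rintro d ⟨x, hx, y, hy, hxy, rfl⟩
    apply Real.rpow_nonneg
    exact Finset.sum_nonneg fun i _ => Real.rpow_nonneg (abs_nonneg _) _
  have hmem : (∑ i, |v i - (0 : Fin n → ℝ) i| ^ P) ^ (1 / P) ∈ {d : ℝ | ∃ x ∈ S, ∃ y ∈ S,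
      x ≠ y ∧ d = (∑ i, |x i - y i| ^ P) ^ (1 / P)} := ⟨v, hv, 0, h0, hvne, rfl⟩
  refine (csInf_le hbdd hmem).trans ?_
  have h2 : (∑ i, |v i - (0 : Fin n → ℝ) i| ^ P) ≤ (n : ℝ) * r ^ P := by
    calc ∑ i, |v i - (0 : Fin n → ℝ) i| ^ P ≤ ∑ _i : Fin n, r ^ P := by
          refine Finset.sum_le_sum fun i _ => ?_
          exact Real.rpow_le_rpow (abs_nonneg _) (by simpa using hvb i) hP0.le
      _ = (n : ℝ) * r ^ P := by simp [mul_comm]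
  calc (∑ i, |v i - (0 : Fin n → ℝ) i| ^ P) ^ (1 / P)
      ≤ ((n : ℝ) * r ^ P) ^ (1 / P) := by
        refine Real.rpow_le_rpow ?_ h2 (by positivity)
        exact Finset.sum_nonneg fun i _ => Real.rpow_nonneg (abs_nonneg _) _
    _ = (n : ℝ) ^ (1 / P) * r := by
        rw [Real.mul_rpow (by positivity) (Real.rpow_nonneg hr _), ← Real.rpow_mul hr,
          mul_one_div, div_self hP0.ne', Real.rpow_one]

lemma dist_bound (n : ℕ) (hn : 0 < n) (P : ℝ) (hP : 1 ≤ P)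
    (c : Module.Basis (Fin n) ℝ (Fin n → ℝ)) (S : Set (Fin n → ℝ))
    (hSspan : S = {x | ∃ z : Fin n → ℤ, x = ∑ i, z i • c i}) :
    lpDistR n P S ≤ (n : ℝ) ^ (1 / P) * |(Matrix.of ⇑c).det| ^ ((1 : ℝ) / n) := by
  have hnR : (0 : ℝ) < n := by exact_mod_cast hn
  have hnP : (0 : ℝ) < (n : ℝ) ^ (1 / P) := Real.rpow_pos_of_pos hnR _
  set D : ℝ := |(Matrix.of ⇑c).det| with hD
  have hD0 : 0 < D := by
    rw [hD]
    refine abs_pos.mpr ?_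
    have hu : IsUnit (Matrix.of ⇑c) := Matrix.linearIndependent_rows_iff_isUnit.mp
      (by exact c.linearIndependent)
    exact ((Matrix.isUnit_iff_isUnit_det _).mp hu).ne_zero
  have h0S : (0 : Fin n → ℝ) ∈ S := by
    rw [hSspan]; exact ⟨0, by simp⟩
  refine le_of_forall_pos_le_add fun ε hε => ?_
  set ε' : ℝ := ε / ((n : ℝ) ^ (1 / P)) with hε'
  have hε'0 : 0 < ε' := div_pos hε hnP
  set r : ℝ := D ^ ((1 : ℝ) / n) + ε' with hrdef
  have hDr : D ^ ((1 : ℝ) / n) < r := by rw [hrdef]; linarith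
  have hDpow : (D ^ ((1 : ℝ) / n)) ^ n = D := by
    rw [← Real.rpow_natCast (D ^ ((1:ℝ)/n)) n, ← Real.rpow_mul hD0.le]
    rw [one_div, inv_mul_cancel₀ (by exact_mod_cast hn.ne' : (n : ℝ) ≠ 0), Real.rpow_one]
  have hr0 : 0 < r := lt_of_le_of_lt (Real.rpow_nonneg hD0.le _) hDr
  have hdlt : D < r ^ n := by
    calc D = (D ^ ((1 : ℝ) / n)) ^ n := hDpow.symm
      _ < r ^ n := by
          apply pow_lt_pow_left₀ hDr (Real.rpow_nonneg hD0.le _) hn.ne'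
  obtain ⟨v, hvmem, hvne, hvb⟩ := exists_short n c r hr0 hdlt
  have hvS : v ∈ S := by
    rw [hSspan]
    obtain ⟨z, hz⟩ := (mem_span_range_iff_exists_fun ℤ).mp hvmem
    exact ⟨z, hz.symm⟩
  have := lpDistR_le n P hP S v h0S hvS hvne r hr0.le hvb
  calc lpDistR n P S ≤ (n : ℝ) ^ (1 / P) * r := this
    _ = (n : ℝ) ^ (1 / P) * D ^ ((1 : ℝ) / n) + ε := by
        rw [hrdef, mul_add, hε', mul_div_cancel₀ _ hnP.ne']

/-- For a full-rank lattice `Λ ⊆ ℝⁿ` and any real `1 ≤ P < 2`,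
one has `d_P(Λ) · d_P(Λ*) ≤ n^(2/P)`. -/
theorem transference_lp_lt_two (n : ℕ) (b : Fin n → Fin n → ℝ)
    (hb : LinearIndependent ℝ b) (Λ : Set (Fin n → ℝ))
    (hΛ : Λ = {x | ∃ z : Fin n → ℤ, x = ∑ i, z i • b i})
    (P : ℝ) (hP1 : 1 ≤ P) (hP2 : P < 2) :
    lpDistR n P Λ * lpDistR n P (dualLattice n Λ) ≤ (n : ℝ) ^ (2 / P) := by
  classical
  rcases Nat.eq_zero_or_pos n with hn | hn
  · subst hn
    have h1 : lpDistR 0 P Λ = 0 := by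
      have he : {d : ℝ | ∃ x ∈ Λ, ∃ y ∈ Λ, x ≠ y ∧
          d = (∑ i, |x i - y i| ^ P) ^ (1 / P)} = ∅ := by
        ext d
        simp only [Set.mem_setOf_eq, Set.mem_empty_iff_false, iff_false]
        rintro ⟨x, -, y, -, hxy, -⟩
        exact hxy (Subsingleton.elim x y)
      rw [lpDistR, he, Real.sInf_empty]
    rw [h1, zero_mul]
    exact Real.rpow_nonneg (by positivity) _
  · have : Nonempty (Fin n) := ⟨⟨0, hn⟩⟩
    have hnR : (0 : ℝ) < n := by exact_mod_cast hn
    set M : Matrix (Fin n) (Fin n) ℝ := Matrix.of b with hM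
    have hu : IsUnit M := Matrix.linearIndependent_rows_iff_isUnit.mp (by exact hb)
    have hudet : IsUnit M.det := (Matrix.isUnit_iff_isUnit_det M).mp hu
    set N : Matrix (Fin n) (Fin n) ℝ := M⁻¹ with hNdef
    have hMN : M * N = 1 := Matrix.mul_nonsing_inv M hudet
    have hNM : N * M = 1 := Matrix.nonsing_inv_mul M hudet
    set d : Fin n → Fin n → ℝ := fun j i => N i j with hd
    have hdN : d = fun j => N.transpose j := rfl
    have hdli : LinearIndependent ℝ d := by
      rw [hdN]
      apply Matrix.linearIndependent_rows_iff_isUnit.mpr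
      rw [Matrix.isUnit_iff_isUnit_det]
      show IsUnit Nᵀ.det
      rw [Matrix.det_transpose, Matrix.det_nonsing_inv]
      rw [Ring.inverse_eq_inv']
      exact isUnit_iff_ne_zero.mpr (inv_ne_zero hudet.ne_zero)
    set c : Module.Basis (Fin n) ℝ (Fin n → ℝ) :=
      basisOfLinearIndependentOfCardEqFinrank hb (by simp) with hcdef
    set c' : Module.Basis (Fin n) ℝ (Fin n → ℝ) :=
      basisOfLinearIndependentOfCardEqFinrank hdli (by simp) with hc'def
    have hc : ⇑c = b := coe_basisOfLinearIndependentOfCardEqFinrank _ _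
    have hc' : ⇑c' = d := coe_basisOfLinearIndependentOfCardEqFinrank _ _
    -- dual lattice characterization
    have hdual : dualLattice n Λ = {y | ∃ z : Fin n → ℤ, y = ∑ j, z j • d j} := by
      ext y
      constructor
      · intro hy
        choose k hk using fun j => hy (b j) (by
          rw [hΛ]
          refine ⟨fun i => if i = j then 1 else 0, ?_⟩
          simp [ite_smul])
        refine ⟨k, ?_⟩
        have hMy : M *ᵥ y = fun j => (k j : ℝ) := by
          funext j
          rw [Matrix.mulVec, dotProduct, ← hk j]
          exact Finset.sum_congr rfl fun i _ => mul_comm _ _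
        have hyN : y = N *ᵥ (fun j => (k j : ℝ)) := by
          rw [← hMy, Matrix.mulVec_mulVec, hNM, Matrix.one_mulVec]
        rw [hyN]
        funext i
        simp [Matrix.mulVec, dotProduct, hd, mul_comm]
      · rintro ⟨z, rfl⟩ x hx
        rw [hΛ] at hx
        obtain ⟨w, rfl⟩ := hx
        refine ⟨∑ j, z j * w j, ?_⟩
        have hy' : (∑ j, z j • d j) = N *ᵥ (fun j => (z j : ℝ)) := by
          funext i
          simp [Matrix.mulVec, dotProduct, hd, mul_comm]
        have hx' : (∑ l, w l • b l) = Mᵀ *ᵥ (fun l => (w l : ℝ)) := by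
          funext i
          simp [Matrix.mulVec, dotProduct, Matrix.transpose_apply, hM, mul_comm]
        rw [hy', hx']
        have : (N *ᵥ (fun j => (z j : ℝ))) ⬝ᵥ (Mᵀ *ᵥ (fun l => (w l : ℝ)))
            = (fun j => (z j : ℝ)) ⬝ᵥ (fun l => (w l : ℝ)) := by
          rw [Matrix.dotProduct_mulVec, Matrix.vecMul_transpose, Matrix.mulVec_mulVec, hMN,
            Matrix.one_mulVec]
        calc ∑ i, (N *ᵥ fun j => (z j : ℝ)) i * (Mᵀ *ᵥ fun l => (w l : ℝ)) i
            = (N *ᵥ (fun j => (z j : ℝ))) ⬝ᵥ (Mᵀ *ᵥ (fun l => (w l : ℝ))) := rfl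
          _ = (fun j => (z j : ℝ)) ⬝ᵥ (fun l => (w l : ℝ)) := this
          _ = ((∑ j, z j * w j : ℤ) : ℝ) := by
              rw [dotProduct]
              push_cast
              rfl
    set D : ℝ := |M.det| with hDdef
    have hD0 : 0 < D := abs_pos.mpr hudet.ne_zero
    have hA : lpDistR n P Λ ≤ (n : ℝ) ^ (1 / P) * D ^ ((1 : ℝ) / n) := by
      have := dist_bound n hn P hP1 c Λ (by rw [hΛ, hc])
      rwa [hc, ← hM, ← hDdef] at this
    have hB : lpDistR n P (dualLattice n Λ) ≤ (n : ℝ) ^ (1 / P) * (D⁻¹) ^ ((1 : ℝ) / n) := by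
      have := dist_bound n hn P hP1 c' (dualLattice n Λ) (by rw [hdual, hc'])
      have hdet' : |(Matrix.of ⇑c').det| = D⁻¹ := by
        rw [hc', hdN]
        show |(Matrix.of fun j => N.transpose j).det| = D⁻¹
        have : (Matrix.of fun j => N.transpose j) = Nᵀ := rfl
        rw [this, Matrix.det_transpose, hNdef, Matrix.det_nonsing_inv,
          Ring.inverse_eq_inv', abs_inv, hDdef]
      rwa [hdet'] at this
    have key : ((n : ℝ) ^ (1 / P) * D ^ ((1 : ℝ) / n)) *
        ((n : ℝ) ^ (1 / P) * (D⁻¹) ^ ((1 : ℝ) / n)) = (n : ℝ) ^ (2 / P) := by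
      rw [show ((n : ℝ) ^ (1 / P) * D ^ ((1 : ℝ) / n)) *
          ((n : ℝ) ^ (1 / P) * (D⁻¹) ^ ((1 : ℝ) / n))
          = ((n : ℝ) ^ (1 / P) * (n : ℝ) ^ (1 / P)) *
            (D ^ ((1 : ℝ) / n) * (D⁻¹) ^ ((1 : ℝ) / n)) by ring]
      rw [← Real.rpow_add hnR, ← Real.mul_rpow hD0.le (inv_nonneg.mpr hD0.le),
        mul_inv_cancel₀ hD0.ne', Real.one_rpow, mul_one]
      congr 1
      ring
    calc lpDistR n P Λ * lpDistR n P (dualLattice n Λ)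
        ≤ ((n : ℝ) ^ (1 / P) * D ^ ((1 : ℝ) / n)) *
          ((n : ℝ) ^ (1 / P) * (D⁻¹) ^ ((1 : ℝ) / n)) := by
          apply mul_le_mul hA hB (lpDistR_nonneg _ _ _) (by positivity)
      _ = (n : ℝ) ^ (2 / P) := key
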